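/- Let (y, f) be a feasible solution to the relaxed origin-based model, fix an origin s and a demand k ∈ D_s with bandwidth d_k > 0. Then for every node i reachable backwards from t_k through positive-flow edges of f(s,·) with i ≠ s, exactly one incoming edge (h,i) has y(s,(h,i)) = 1; consequently, tracing back from t_k along y-selected incoming edges yields a well-defined directed path from s to t_k. -/

import Mathlib

/-- In a feasible solution `(y, f)` of the relaxed origin-based model for origin `s`,
fix a destination `t₀ ∈ T` (its demand is positive).  Every node `i ≠ s` reachable
backwards from `t₀` through positive-flow edges has exactly one incoming edge with
`y = 1`; consequently tracing back from `t₀` along `y`-selected incoming edges yields a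
well-defined directed path from `s` to `t₀`. -/
theorem traceback_well_defined {V : Type} [DecidableEq V]
    (L : Finset (V × V)) (s : V) (T : Finset V) (hsT : s ∉ T) (hTne : T.Nonempty)
    (d : V → ℝ) (hd : ∀ t ∈ T, 0 < d t)
    (y : V × V → ℕ) (f : V × V → ℝ)
    (hy01 : ∀ e, y e ≤ 1) (hf0 : ∀ e, 0 ≤ f e)
    (hfb : ∀ e, f e ≤ (y e : ℝ) * ∑ t ∈ T, d t)
    (hcons : ∀ i : V,
      ∑ e ∈ L.filter (fun e => e.2 = i), f e - ∑ e ∈ L.filter (fun e => e.1 = i), f e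
        = if i = s then -(∑ t ∈ T, d t) else if i ∈ T then d i else 0)
    (hpu : ∀ i : V,
      (i = s → ∑ e ∈ L.filter (fun e => e.2 = i), y e = 0)
      ∧ (i ∈ T → ∑ e ∈ L.filter (fun e => e.2 = i), y e = 1)
      ∧ (i ≠ s → ∑ e ∈ L.filter (fun e => e.2 = i), y e ≤ 1))
    (t₀ : V) (ht₀ : t₀ ∈ T) :
    (∀ i : V, i ≠ s →
      Relation.ReflTransGen (fun a b => (b, a) ∈ L ∧ 0 < f (b, a)) t₀ i →
      (L.filter fun e => e.2 = i ∧ y e = 1).card = 1)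
    ∧ ∃ p : List V, p.head? = some s ∧ p.getLast? = some t₀ ∧
        p.Chain' (fun a b => (a, b) ∈ L ∧ y (a, b) = 1) := by
  classical
  set r : V → V → Prop := fun a b => (b, a) ∈ L ∧ 0 < f (b, a) with hr
  -- every positive-flow edge is y-selected
  have hy1 : ∀ e, 0 < f e → y e = 1 := by
    intro e hfe
    have h1 := hy01 e
    rcases Nat.eq_zero_or_pos (y e) with h0 | h0
    · exfalso
      have hb := hfb e
      rw [h0] at hb
      norm_num at hb
      linarith
    · omega
  -- positive inflow at every backwards-reachable node ≠ s
  have hin : ∀ i : V, i ≠ s → Relation.ReflTransGen r t₀ i →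
      0 < ∑ e ∈ L.filter (fun e => e.2 = i), f e := by
    intro i hi hreach
    have hout0 : 0 ≤ ∑ e ∈ L.filter (fun e => e.1 = i), f e :=
      Finset.sum_nonneg (fun e _ => hf0 e)
    rcases hreach.cases_tail with h | ⟨c, _, hstep⟩
    · subst h
      have hc := hcons i
      rw [if_neg hi, if_pos ht₀] at hc
      have := hd i ht₀
      linarith
    · obtain ⟨hmem, hpos⟩ := hstep
      have hm : (i, c) ∈ L.filter (fun e => e.1 = i) := by
        simp [Finset.mem_filter, hmem]
      have houtpos : 0 < ∑ e ∈ L.filter (fun e => e.1 = i), f e :=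
        lt_of_lt_of_le hpos (Finset.single_le_sum (fun e _ => hf0 e) hm)
      have hc := hcons i
      rw [if_neg hi] at hc
      by_cases hiT : i ∈ T
      · rw [if_pos hiT] at hc
        have := hd i hiT
        linarith
      · rw [if_neg hiT] at hc
        linarith
  -- Part 1
  have part1 : ∀ i : V, i ≠ s → Relation.ReflTransGen r t₀ i →
      (L.filter fun e => e.2 = i ∧ y e = 1).card = 1 := by
    intro i hi hreach
    obtain ⟨e₀, he₀, hfe₀⟩ : ∃ e ∈ L.filter (fun e => e.2 = i), 0 < f e := by
      by_contra h
      push_neg at h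
      have hz : ∑ e ∈ L.filter (fun e => e.2 = i), f e ≤ 0 :=
        Finset.sum_nonpos (fun e he => h e he)
      exact absurd (hin i hi hreach) (not_lt.mpr hz)
    have hye₀ : y e₀ = 1 := hy1 e₀ hfe₀
    have hsum1 : ∑ e ∈ L.filter (fun e => e.2 = i), y e = 1 := by
      have hle := (hpu i).2.2 hi
      have hge : 1 ≤ ∑ e ∈ L.filter (fun e => e.2 = i), y e :=
        hye₀ ▸ Finset.single_le_sum (fun e _ => Nat.zero_le _) he₀
      omega
    have hfilter : (L.filter fun e => e.2 = i ∧ y e = 1)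
        = (L.filter (fun e => e.2 = i)).filter (fun e => y e = 1) := by
      rw [Finset.filter_filter]
    have hsplit := Finset.sum_filter_add_sum_filter_not
      (L.filter (fun e => e.2 = i)) (fun e => y e = 1) y
    have hz : ∑ e ∈ (L.filter (fun e => e.2 = i)).filter (fun e => ¬ y e = 1), y e = 0 := by
      apply Finset.sum_eq_zero
      intro e he
      have h1 := hy01 e
      have hne := (Finset.mem_filter.mp he).2
      omega
    have hone : ∑ e ∈ (L.filter (fun e => e.2 = i)).filter (fun e => y e = 1), y e
        = ((L.filter (fun e => e.2 = i)).filter (fun e => y e = 1)).card := by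
      rw [Finset.sum_congr rfl (fun e he => (Finset.mem_filter.mp he).2),
        Finset.sum_const, smul_eq_mul, mul_one]
    rw [hfilter]
    omega
  refine ⟨part1, ?_⟩
  by_cases hs : Relation.ReflTransGen r t₀ s
  · -- build the path from the reachability witness
    have key : ∀ v, Relation.ReflTransGen r t₀ v →
        ∃ p : List V, p.head? = some v ∧ p.getLast? = some t₀ ∧
          p.Chain' (fun a b => (a, b) ∈ L ∧ y (a, b) = 1) := by
      intro v hv
      induction hv with
      | refl => exact ⟨[t₀], rfl, rfl, List.isChain_singleton _⟩
      | @tail b c h hstep ih =>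
        obtain ⟨p, hph, hpl, hpc⟩ := ih
        obtain ⟨hmem, hpos⟩ := hstep
        cases p with
        | nil => simp at hph
        | cons a q =>
          have hab : a = b := by simpa using hph
          subst hab
          refine ⟨c :: a :: q, rfl, ?_, ?_⟩
          · rw [List.getLast?_cons_cons]
            exact hpl
          · refine List.isChain_cons.mpr ⟨?_, hpc⟩
            intro z hz
            simp only [List.head?_cons, Option.mem_def, Option.some.injEq] at hz
            subst hz
            exact ⟨hmem, hy1 _ hpos⟩
    exact key s hs
  · -- otherwise derive a contradiction from flow conservation
    exfalso
    set A : Finset V := (insert t₀ (L.image Prod.fst)).filter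
      (fun v => Relation.ReflTransGen r t₀ v) with hA
    have ht₀A : t₀ ∈ A := by
      rw [hA, Finset.mem_filter]
      exact ⟨Finset.mem_insert_self _ _, Relation.ReflTransGen.refl⟩
    have hsA : s ∉ A := fun h => hs (Finset.mem_filter.mp h).2
    have hclosed : ∀ e ∈ L, e.2 ∈ A → 0 < f e → e.1 ∈ A := by
      intro e heL he2 hfe
      rw [hA, Finset.mem_filter]
      refine ⟨Finset.mem_insert_of_mem (Finset.mem_image_of_mem Prod.fst heL), ?_⟩
      exact ((Finset.mem_filter.mp he2).2).tail ⟨heL, hfe⟩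
    have h1 : ∑ a ∈ A, ∑ e ∈ L.filter (fun e => e.2 = a), f e
        = ∑ e ∈ L.filter (fun e => e.2 ∈ A), f e := by
      rw [← Finset.sum_fiberwise_of_maps_to (g := Prod.snd) (t := A)
        (fun e he => (Finset.mem_filter.mp he).2) f]
      apply Finset.sum_congr rfl
      intro a haA
      apply Finset.sum_congr ?_ (fun _ _ => rfl)
      rw [Finset.filter_filter]
      apply Finset.filter_congr
      intro e _
      constructor
      · intro h; exact ⟨h ▸ haA, h⟩
      · intro h; exact h.2
    have h2 : ∑ a ∈ A, ∑ e ∈ L.filter (fun e => e.1 = a), f e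
        = ∑ e ∈ L.filter (fun e => e.1 ∈ A), f e := by
      rw [← Finset.sum_fiberwise_of_maps_to (g := Prod.fst) (t := A)
        (fun e he => (Finset.mem_filter.mp he).2) f]
      apply Finset.sum_congr rfl
      intro a haA
      apply Finset.sum_congr ?_ (fun _ _ => rfl)
      rw [Finset.filter_filter]
      apply Finset.filter_congr
      intro e _
      constructor
      · intro h; exact ⟨h ▸ haA, h⟩
      · intro h; exact h.2
    have h3 : ∑ e ∈ L.filter (fun e => e.2 ∈ A), f e
        ≤ ∑ e ∈ L.filter (fun e => e.1 ∈ A), f e := by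
      have hsplit := Finset.sum_filter_add_sum_filter_not
        (L.filter (fun e => e.2 ∈ A)) (fun e => e.1 ∈ A) f
      have hz : ∑ e ∈ (L.filter (fun e => e.2 ∈ A)).filter (fun e => ¬ e.1 ∈ A), f e = 0 := by
        apply Finset.sum_eq_zero
        intro e he
        simp only [Finset.mem_filter] at he
        obtain ⟨⟨heL, he2⟩, he1⟩ := he
        by_contra hne
        have hpos : 0 < f e := lt_of_le_of_ne (hf0 e) (Ne.symm hne)
        exact he1 (hclosed e heL he2 hpos)
      have hsub : (L.filter (fun e => e.2 ∈ A)).filter (fun e => e.1 ∈ A)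
          ⊆ L.filter (fun e => e.1 ∈ A) := by
        intro e he
        simp only [Finset.mem_filter] at he ⊢
        exact ⟨he.1.1, he.2⟩
      have hle := Finset.sum_le_sum_of_subset_of_nonneg hsub (fun e _ _ => hf0 e)
      linarith
    have h4 : ∑ a ∈ A, (∑ e ∈ L.filter (fun e => e.2 = a), f e
          - ∑ e ∈ L.filter (fun e => e.1 = a), f e)
        = ∑ a ∈ A, (if a = s then -(∑ t ∈ T, d t) else if a ∈ T then d a else 0) :=
      Finset.sum_congr rfl (fun a _ => hcons a)
    rw [Finset.sum_sub_distrib, h1, h2] at h4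
    have h5 : 0 < ∑ a ∈ A, (if a = s then -(∑ t ∈ T, d t) else if a ∈ T then d a else 0) := by
      have hterm : ∀ a ∈ A,
          (0:ℝ) ≤ (if a = s then -(∑ t ∈ T, d t) else if a ∈ T then d a else 0) := by
        intro a haA
        have has : a ≠ s := fun h => hsA (h ▸ haA)
        rw [if_neg has]
        split_ifs with h
        · exact (hd a h).le
        · exact le_rfl
      have hge := Finset.single_le_sum hterm ht₀A
      have ht₀s : t₀ ≠ s := fun h => hsT (h ▸ ht₀)
      rw [if_neg ht₀s, if_pos ht₀] at hge
      have := hd t₀ ht₀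
      linarith
    linarith
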